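/- Let $n \ge 1$ and let $A$ be a real $n \times n$ matrix with entries $a_{ij}$ such that for every $i$, $a_{ii} < 0$ and $\sum_{j\ne i}|a_{ij}| \le |a_{ii}|$. Write $A = L + D + U$ with $D$ diagonal, $L$ strictly lower triangular, $U$ strictly upper triangular, and let $\Delta t > 0$. If $\lambda \in \mathbb{C}$ and $x \in \mathbb{C}^n$, $x \ne 0$, satisfy $(I + \Delta t\, U)x = \lambda (I - \Delta t\, L - \Delta t\, D)x$, then $|\lambda| \le 1$. -/

import Mathlib

open Finset

theorem stmt_8 (n : ℕ) (hn : 1 ≤ n) (A L D U : Matrix (Fin n) (Fin n) ℝ)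
    (hdiag : ∀ i, A i i < 0)
    (hdom : ∀ i, ∑ j ∈ univ \ {i}, |A i j| ≤ |A i i|)
    (hL : ∀ i j, L i j = if j < i then A i j else 0)
    (hD : D = Matrix.diagonal fun i => A i i)
    (hU : ∀ i j, U i j = if i < j then A i j else 0)
    (dt : ℝ) (hdt : 0 < dt)
    (lam : ℂ) (x : Fin n → ℂ) (hx : x ≠ 0)
    (heig : ((1 : Matrix (Fin n) (Fin n) ℂ) + (dt : ℂ) • U.map Complex.ofReal).mulVec x =
      lam • (((1 : Matrix (Fin n) (Fin n) ℂ) - (dt : ℂ) • L.map Complex.ofReal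
        - (dt : ℂ) • D.map Complex.ofReal).mulVec x)) :
    ‖lam‖ ≤ 1 := by
  -- choose index of maximal modulus
  have hne : (univ : Finset (Fin n)).Nonempty := ⟨⟨0, hn⟩, mem_univ _⟩
  obtain ⟨i, -, hmax⟩ := Finset.exists_max_image univ (fun j => ‖x j‖) hne
  set Mx : ℝ := ‖x i‖ with hMx
  have hmax' : ∀ j, ‖x j‖ ≤ Mx := fun j => hmax j (mem_univ j)
  have hMpos : 0 < Mx := by
    obtain ⟨k, hk⟩ := Function.ne_iff.mp hx
    have : 0 < ‖x k‖ := by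
      exact norm_pos_iff.mpr hk
    exact lt_of_lt_of_le this (hmax' k)
  -- row equation
  have h := congrFun heig i
  simp only [Matrix.add_mulVec, Matrix.sub_mulVec, Matrix.one_mulVec, Matrix.smul_mulVec,
    Pi.add_apply, Pi.sub_apply, Pi.smul_apply, smul_eq_mul] at h
  have hLs : (L.map Complex.ofReal).mulVec x i = ∑ j, (L i j : ℂ) * x j := by
    simp [Matrix.mulVec, dotProduct, Matrix.map_apply]
  have hUs : (U.map Complex.ofReal).mulVec x i = ∑ j, (U i j : ℂ) * x j := by
    simp [Matrix.mulVec, dotProduct, Matrix.map_apply]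
  have hDs : (D.map Complex.ofReal).mulVec x i = (A i i : ℂ) * x i := by
    subst hD
    simp [Matrix.diagonal_map, Matrix.mulVec_diagonal]
  rw [hLs, hUs, hDs] at h
  rw [show (dt:ℂ) * ((A i i:ℂ) * x i) = (dt:ℂ) * (A i i:ℂ) * x i from (mul_assoc _ _ _).symm] at h
  set sL : ℂ := ∑ j, (L i j : ℂ) * x j with hsL
  set sU : ℂ := ∑ j, (U i j : ℂ) * x j with hsU
  set SL : ℝ := ∑ j, |L i j| with hSL
  set SU : ℝ := ∑ j, |U i j| with hSU
  have hSLnn : 0 ≤ SL := Finset.sum_nonneg fun j _ => abs_nonneg _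
  have hSUnn : 0 ≤ SU := Finset.sum_nonneg fun j _ => abs_nonneg _
  -- bounds on sums
  have habsL : ‖sL‖ ≤ SL * Mx := by
    calc ‖sL‖ ≤ ∑ j, ‖((L i j : ℂ) * x j)‖ :=
          norm_sum_le _ _
    _ = ∑ j, |L i j| * ‖x j‖ := by
          simp [norm_mul, Complex.norm_real, Real.norm_eq_abs]
    _ ≤ ∑ j, |L i j| * Mx := by
          exact Finset.sum_le_sum fun j _ => mul_le_mul_of_nonneg_left (hmax' j) (abs_nonneg _)
    _ = SL * Mx := by rw [hSL, Finset.sum_mul]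
  have habsU : ‖sU‖ ≤ SU * Mx := by
    calc ‖sU‖ ≤ ∑ j, ‖((U i j : ℂ) * x j)‖ :=
          norm_sum_le _ _
    _ = ∑ j, |U i j| * ‖x j‖ := by
          simp [norm_mul, Complex.norm_real, Real.norm_eq_abs]
    _ ≤ ∑ j, |U i j| * Mx := by
          exact Finset.sum_le_sum fun j _ => mul_le_mul_of_nonneg_left (hmax' j) (abs_nonneg _)
    _ = SU * Mx := by rw [hSU, Finset.sum_mul]
  -- diagonal dominance
  have hdom' : SL + SU ≤ -(A i i) := by
    have hsplit : SL + SU = ∑ j ∈ univ \ {i}, |A i j| := by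
      have h1 : SL + SU = ∑ j, (|L i j| + |U i j|) := by
        rw [hSL, hSU, Finset.sum_add_distrib]
      have h2 := Finset.sum_sdiff (f := fun j => |L i j| + |U i j|)
        (Finset.subset_univ ({i} : Finset (Fin n)))
      have h3 : ∑ j ∈ ({i} : Finset (Fin n)), (|L i j| + |U i j|) = 0 := by
        simp [hL, hU]
      have h4 : ∑ j ∈ univ \ {i}, (|L i j| + |U i j|) = ∑ j ∈ univ \ {i}, |A i j| := by
        refine Finset.sum_congr rfl fun j hj => ?_
        have hji : j ≠ i := by simpa using (Finset.mem_sdiff.mp hj).2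
        rcases lt_trichotomy j i with hlt | heq | hgt
        · simp [hL, hU, hlt, not_lt_of_gt hlt]
        · exact absurd heq hji
        · simp [hL, hU, hgt, not_lt_of_gt hgt]
      rw [h1, ← h2, h3, add_zero, h4]
    rw [hsplit]
    have := hdom i
    rwa [abs_of_neg (hdiag i)] at this
  set c : ℝ := 1 - dt * A i i - dt * SL with hc
  set b : ℝ := 1 + dt * SU with hb
  have hbpos : 0 < b := by positivity
  have hcb : b ≤ c := by
    rw [hb, hc]; nlinarith [hdom', hdt.le]
  have hcpos : 0 < c := lt_of_lt_of_le hbpos hcb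
  -- take absolute values of row equation
  -- h : x i + dt * sU = lam * (x i - dt * sL - dt * (A i i) * x i)
  have hinner : ‖(x i - (dt : ℂ) * sL - (dt : ℂ) * (A i i : ℂ) * x i)‖ ≥ c * Mx := by
    have hrw : x i - (dt : ℂ) * sL - (dt : ℂ) * (A i i : ℂ) * x i
        = ((1 - dt * A i i : ℝ) : ℂ) * x i - (dt : ℂ) * sL := by
      push_cast; ring
    rw [hrw]
    have h5 : ‖(((1 - dt * A i i : ℝ) : ℂ) * x i)‖ = (1 - dt * A i i) * Mx := by
      rw [norm_mul, Complex.norm_real, Real.norm_eq_abs, abs_of_pos (by nlinarith [hdiag i] : (0:ℝ) < 1 - dt * A i i)]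
    have h6 : ‖((dt : ℂ) * sL)‖ ≤ dt * (SL * Mx) := by
      rw [norm_mul, Complex.norm_real, Real.norm_eq_abs, abs_of_pos hdt]
      exact mul_le_mul_of_nonneg_left habsL hdt.le
    have h7 := norm_sub_norm_le (((1 - dt * A i i : ℝ) : ℂ) * x i) ((dt : ℂ) * sL)
    rw [h5] at h7
    rw [hc]; nlinarith
  have hrhs : ‖(x i + (dt : ℂ) * sU)‖ ≤ b * Mx := by
    have := norm_add_le (x i) ((dt : ℂ) * sU)
    have h8 : ‖((dt : ℂ) * sU)‖ ≤ dt * (SU * Mx) := by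
      rw [norm_mul, Complex.norm_real, Real.norm_eq_abs, abs_of_pos hdt]
      exact mul_le_mul_of_nonneg_left habsU hdt.le
    rw [hb]; nlinarith
  have hkey : ‖lam‖ * (c * Mx) ≤ b * Mx := by
    calc ‖lam‖ * (c * Mx)
        ≤ ‖lam‖ * ‖(x i - (dt : ℂ) * sL - (dt : ℂ) * (A i i : ℂ) * x i)‖ :=
          mul_le_mul_of_nonneg_left hinner (norm_nonneg lam)
    _ = ‖(x i + (dt : ℂ) * sU)‖ := by
          rw [← norm_mul, ← h]
    _ ≤ b * Mx := hrhs
  have hcM : 0 < c * Mx := mul_pos hcpos hMpos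
  nlinarith [hkey, hcb, hMpos, hcM, norm_nonneg lam]
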